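/- arXiv:1411.1698 — 2 statements merged into one kernel-verified Lean document; each statement's English description precedes it below -/
import Mathlib

section
/- The function w(x) = w₁(x, θ(x)) is differentiable on (0.37613, 0.58870) with derivative w′(x) = −4·(x + θ(x)), and w is strictly decreasing on [0.37613, 0.58870]. -/
open scoped Classical

/-- The Gaussian error function `erf x = (2/√π) ∫₀ˣ exp(−t²) dt`. -/
noncomputable def erf (x : ℝ) : ℝ :=
  (2 / Real.sqrt Real.pi) * ∫ t in (0:ℝ)..x, Real.exp (-t ^ 2)

/-- `w₁(x,θ) = −2x² + θ² + log(1 + erf(2x+θ))`. -/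
noncomputable def w₁ (x θ : ℝ) : ℝ :=
  -2 * x ^ 2 + θ ^ 2 + Real.log (1 + erf (2 * x + θ))

/-- `w₂(x,θ) = θ + (1/√π)·exp(−(2x+θ)²)/(1 + erf(2x+θ))`. -/
noncomputable def w₂ (x θ : ℝ) : ℝ :=
  θ + (1 / Real.sqrt Real.pi) * (Real.exp (-(2 * x + θ) ^ 2) / (1 + erf (2 * x + θ)))

/-- `θ(x)`: the unique solution `θ` of `w₂(x,θ) = 0` (junk value `0` if it does not
exist uniquely). -/
noncomputable def thetaOf (x : ℝ) : ℝ :=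
  if h : ∃! θ : ℝ, w₂ x θ = 0 then h.choose else 0

/-- `w(x) = w₁(x, θ(x))`. -/
noncomputable def wfun (x : ℝ) : ℝ := w₁ x (thetaOf x)


open MeasureTheory Set Filter Topology

noncomputable def Eg (s : ℝ) : ℝ := Real.exp (-s ^ 2)
noncomputable def Ag (s : ℝ) : ℝ := ∫ t in Set.Iic s, Real.exp (-t ^ 2)
noncomputable def gg (s : ℝ) : ℝ := Eg s / (2 * Ag s)


lemma cont_gauss : Continuous fun t : ℝ => Real.exp (-t ^ 2) := by fun_prop

lemma int_gauss : Integrable fun t : ℝ => Real.exp (-t ^ 2) := by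
  simpa using integrable_exp_neg_mul_sq (one_pos)

lemma intOn (s : ℝ) : IntegrableOn (fun t : ℝ => Real.exp (-t ^ 2)) (Set.Iic s) :=
  int_gauss.integrableOn

lemma Ag_sub (a b : ℝ) : Ag b - Ag a = ∫ t in a..b, Real.exp (-t ^ 2) :=
  intervalIntegral.integral_Iic_sub_Iic (intOn a) (intOn b)

lemma hasDerivAt_Eg (s : ℝ) : HasDerivAt Eg (-2 * s * Eg s) s := by
  have h : HasDerivAt (fun t : ℝ => -t ^ 2) (-(2 * s)) s := by
    simpa using ((hasDerivAt_pow 2 s).fun_neg)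
  have := h.exp
  unfold Eg
  convert this using 1
  ring

lemma hasDerivAt_Ag (s : ℝ) : HasDerivAt Ag (Eg s) s := by
  have key : ∀ t, Ag t = Ag 0 + ∫ u in (0:ℝ)..t, Real.exp (-u ^ 2) := by
    intro t; rw [← Ag_sub 0 t]; ring
  have h : HasDerivAt (fun t => Ag 0 + ∫ u in (0:ℝ)..t, Real.exp (-u ^ 2))
      (Real.exp (-s ^ 2)) s :=
    ((cont_gauss.integral_hasStrictDerivAt 0 s).hasDerivAt).const_add (Ag 0)
  exact h.congr_of_eventuallyEq (Filter.Eventually.of_forall key)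

lemma continuous_Ag : Continuous Ag :=
  Differentiable.continuous (fun s => (hasDerivAt_Ag s).differentiableAt)

lemma Ag_pos (s : ℝ) : 0 < Ag s := by
  have h1 : Ag s - Ag (s - 1) = ∫ t in (s-1)..s, Real.exp (-t ^ 2) := Ag_sub _ _
  have h2 : 0 < ∫ t in (s-1)..s, Real.exp (-t ^ 2) := by
    apply intervalIntegral.intervalIntegral_pos_of_pos_on
    · exact (cont_gauss.intervalIntegrable _ _)
    · intro x _; positivity
    · linarith
  have h3 : 0 ≤ Ag (s - 1) :=
    setIntegral_nonneg measurableSet_Iic fun t _ => (Real.exp_pos _).le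
  linarith

lemma Eg_pos (s : ℝ) : 0 < Eg s := Real.exp_pos _

lemma tendsto_Eg : Tendsto Eg atBot (𝓝 0) := by
  have h1 : Tendsto (fun s : ℝ => -s ^ 2) atBot atBot := by
    rw [tendsto_atBot]
    intro b
    filter_upwards [eventually_le_atBot (-1 : ℝ), eventually_le_atBot b] with s h1 h2
    nlinarith
  exact Real.tendsto_exp_atBot.comp h1

-- ∫_{Iic s} t e^{-t²} = -e^{-s²}/2
lemma int_t_gauss (s : ℝ) :
    ∫ t in Set.Iic s, t * Real.exp (-t ^ 2) = -Real.exp (-s ^ 2) / 2 := by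
  have hint : IntegrableOn (fun t : ℝ => t * Real.exp (-t ^ 2)) (Set.Iic s) := by
    have : Integrable fun t : ℝ => t * Real.exp (-t ^ 2) := by
      simpa using integrable_mul_exp_neg_mul_sq (one_pos)
    exact this.integrableOn
  have hder : ∀ t ∈ Set.Iic s, HasDerivAt (fun u : ℝ => -Real.exp (-u ^ 2) / 2)
      (t * Real.exp (-t ^ 2)) t := by
    intro t _
    have := ((hasDerivAt_Eg t).fun_neg).div_const 2
    simp only [Eg] at this
    exact this.congr_deriv (by ring)
  have := integral_Iic_of_hasDerivAt_of_tendsto' hder hint (m := 0) ?_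
  · rw [this]; ring
  · have : Tendsto (fun u : ℝ => -Eg u / 2) atBot (𝓝 (-0 / 2)) :=
      (tendsto_Eg.neg).div_const 2
    simpa [Eg] using this

lemma Ag_le {s : ℝ} (hs : s < 0) : 2 * (-s) * Ag s ≤ Eg s := by
  have hint2 : IntegrableOn (fun t : ℝ => (1/s) * (t * Real.exp (-t ^ 2))) (Set.Iic s) := by
    have : Integrable fun t : ℝ => t * Real.exp (-t ^ 2) := by
      simpa using integrable_mul_exp_neg_mul_sq (one_pos)
    exact (this.const_mul _).integrableOn
  have hle : Ag s ≤ ∫ t in Set.Iic s, (1/s) * (t * Real.exp (-t ^ 2)) := by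
    apply setIntegral_mono_on (intOn s) hint2 measurableSet_Iic
    intro t ht
    have hts : t ≤ s := ht
    have h1 : 1 ≤ t / s := by
      rw [le_div_iff_of_neg hs]; linarith
    have hE := Real.exp_pos (-t ^ 2)
    calc Real.exp (-t ^ 2) = 1 * Real.exp (-t ^ 2) := by ring
      _ ≤ (t / s) * Real.exp (-t ^ 2) := by nlinarith
      _ = (1/s) * (t * Real.exp (-t ^ 2)) := by ring
  rw [MeasureTheory.integral_const_mul, int_t_gauss] at hle
  have : Ag s ≤ Eg s / (-2 * s) := by
    rw [Eg]
    calc Ag s ≤ 1/s * (-Real.exp (-s ^ 2) / 2) := hle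
      _ = Real.exp (-s^2) / (-2 * s) := by field_simp
  have h2 : 0 < -2 * s := by linarith
  rw [le_div_iff₀ h2] at this
  nlinarith

lemma tendsto_Ag : Tendsto Ag atBot (𝓝 0) := by
  apply squeeze_zero' (g := fun s => Eg s / 2)
  · filter_upwards with s using (Ag_pos s).le
  · filter_upwards [eventually_le_atBot (-1 : ℝ)] with s hs
    have := Ag_le (by linarith : s < 0)
    nlinarith [Ag_pos s]
  · simpa using tendsto_Eg.div_const 2


lemma Ag_zero : Ag 0 = Real.sqrt Real.pi / 2 := by
  have heven : Ag 0 = ∫ t in Set.Ioi (0:ℝ), Real.exp (-t ^ 2) := by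
    rw [Ag, ← neg_zero, ← integral_comp_neg_Iic, neg_zero]
    congr 1; funext t; ring_nf
  have htot : Ag 0 + ∫ t in Set.Ioi (0:ℝ), Real.exp (-t ^ 2) = Real.sqrt Real.pi := by
    rw [Ag, intervalIntegral.integral_Iic_add_Ioi (intOn 0) (int_gauss.integrableOn)]
    have := integral_gaussian 1
    simpa using this
  linarith [heven, htot]


lemma sqrt_pi_pos : 0 < Real.sqrt Real.pi := Real.sqrt_pos.mpr Real.pi_pos

lemma erf_Ag (s : ℝ) : 1 + erf s = 2 / Real.sqrt Real.pi * Ag s := by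
  rw [erf, ← Ag_sub 0 s, Ag_zero]
  field_simp
  ring

lemma one_add_erf_pos (s : ℝ) : 0 < 1 + erf s := by
  rw [erf_Ag]
  have := sqrt_pi_pos
  have := Ag_pos s
  positivity

-- w₂ in terms of gg
lemma w₂_gg (x θ : ℝ) : w₂ x θ = θ + gg (2 * x + θ) := by
  rw [w₂, gg, erf_Ag, Eg]
  have h1 := sqrt_pi_pos
  have h2 := Ag_pos (2 * x + θ)
  field_simp

lemma gg_pos (s : ℝ) : 0 < gg s := by
  rw [gg]; have := Ag_pos s; have := Eg_pos s; positivity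

-- 2 s Ag s + Eg s ≥ 0  (equivalently s + gg s ≥ 0)
lemma sA_E_nonneg (s : ℝ) : 0 ≤ 2 * s * Ag s + Eg s := by
  rcases le_or_gt 0 s with h | h
  · nlinarith [Ag_pos s, Eg_pos s]
  · nlinarith [Ag_le h]

lemma hasDerivAt_gg (s : ℝ) :
    HasDerivAt gg (-(Eg s * (2 * s * Ag s + Eg s)) / (2 * (Ag s) ^ 2)) s := by
  have h := (hasDerivAt_Eg s).div ((hasDerivAt_Ag s).const_mul 2)
    (by have := Ag_pos s; positivity)
  have : gg = fun s => Eg s / (2 * Ag s) := rfl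
  rw [this]
  refine h.congr_deriv ?_
  have := Ag_pos s
  field_simp
  ring

lemma gg_anti : Antitone gg := by
  have hdiff : Differentiable ℝ gg := fun s => (hasDerivAt_gg s).differentiableAt
  apply antitone_of_deriv_nonpos hdiff
  intro s
  rw [(hasDerivAt_gg s).deriv]
  have h1 := sA_E_nonneg s
  have h2 := Eg_pos s
  have h3 := Ag_pos s
  apply div_nonpos_of_nonpos_of_nonneg
  · nlinarith
  · positivity

lemma continuous_gg : Continuous gg :=
  Differentiable.continuous (fun s => (hasDerivAt_gg s).differentiableAt)

-- Pg
noncomputable def Pg (s : ℝ) : ℝ := Ag s + s * Eg s / (1 + 2 * s ^ 2)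

lemma hasDerivAt_Pg (s : ℝ) : HasDerivAt Pg (2 * Eg s / (1 + 2 * s ^ 2) ^ 2) s := by
  have hden : (1 : ℝ) + 2 * s ^ 2 ≠ 0 := by positivity
  have h2 : HasDerivAt (fun u : ℝ => 1 + 2 * u ^ 2) (2 * (2 * s)) s := by
    simpa using (((hasDerivAt_pow 2 s)).const_mul 2).const_add 1
  have h := (hasDerivAt_Ag s).add
    (((hasDerivAt_id s).mul (hasDerivAt_Eg s)).div h2 hden)
  have hPg : Pg = fun u => Ag u + u * Eg u / (1 + 2 * u ^ 2) := rfl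
  rw [hPg]
  refine h.congr_deriv ?_
  simp only [Pi.mul_apply, id_eq]
  field_simp
  ring

lemma tendsto_Pg : Tendsto Pg atBot (𝓝 0) := by
  have h2 : Tendsto (fun s => s * Eg s / (1 + 2 * s ^ 2)) atBot (𝓝 0) := by
    refine squeeze_zero_norm (fun s => ?_) tendsto_Eg
    have h1 : |s| ≤ 1 + 2 * s ^ 2 := by nlinarith [abs_nonneg s, sq_abs s]
    have h3 : (0:ℝ) < 1 + 2 * s ^ 2 := by positivity
    rw [Real.norm_eq_abs, abs_div, abs_mul, abs_of_pos (Eg_pos s), abs_of_pos h3,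
      div_le_iff₀ h3]
    nlinarith [Eg_pos s, abs_nonneg s]
  have := tendsto_Ag.add h2
  rw [add_zero] at this
  exact this

lemma Pg_pos (s : ℝ) : 0 < Pg s := by
  have hmono : StrictMono Pg := by
    apply strictMono_of_deriv_pos
    intro u
    rw [(hasDerivAt_Pg u).deriv]
    have := Eg_pos u
    positivity
  have hnonneg : ∀ u, 0 ≤ Pg u := by
    intro u
    apply le_of_tendsto tendsto_Pg
    filter_upwards [eventually_le_atBot u] with t ht using hmono.monotone ht
  calc (0:ℝ) ≤ Pg (s - 1) := hnonneg _
    _ < Pg s := hmono (by linarith)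

-- Dg
noncomputable def Dg (s : ℝ) : ℝ := 2 * (Ag s) ^ 2 - 2 * s * Ag s * Eg s - (Eg s) ^ 2

lemma hasDerivAt_Dg (s : ℝ) :
    HasDerivAt Dg (2 * Eg s * (1 + 2 * s ^ 2) * Pg s) s := by
  have h := (((hasDerivAt_Ag s).pow 2).const_mul 2).sub
    ((((hasDerivAt_id s).mul (hasDerivAt_Ag s)).mul (hasDerivAt_Eg s)).const_mul 2)
  have h' := h.sub ((hasDerivAt_Eg s).pow 2)
  have hDg : Dg = fun u => 2 * (Ag u) ^ 2 - 2 * u * Ag u * Eg u - (Eg u) ^ 2 := rfl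
  rw [hDg]
  refine (h'.congr_deriv ?_).congr_of_eventuallyEq (Filter.Eventually.of_forall fun u => ?_)
  · have hden : (1 : ℝ) + 2 * s ^ 2 ≠ 0 := by positivity
    simp only [Pg, Pi.mul_apply, id_eq]
    push_cast
    field_simp
    ring
  · simp only [Pi.sub_apply, Pi.mul_apply, Pi.pow_apply, id_eq]; ring

lemma tendsto_Dg : Tendsto Dg atBot (𝓝 0) := by
  refine squeeze_zero_norm' ?_ (show Tendsto (fun s => 3 * (Eg s) ^ 2) atBot (𝓝 0) by
    simpa using ((tendsto_Eg.pow 2).const_mul 3))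
  · filter_upwards [eventually_le_atBot (-1 : ℝ)] with s hs
    have h1 : 0 < Ag s := Ag_pos s
    have h2 : 2 * (-s) * Ag s ≤ Eg s := Ag_le (by linarith)
    have h3 : 0 < Eg s := Eg_pos s
    have h4 : 2 * Ag s ≤ Eg s := by nlinarith
    have h5 := mul_le_mul_of_nonneg_right h2 h3.le
    have h6 := mul_le_mul_of_nonneg_right h4 h1.le
    have h7 := mul_le_mul_of_nonneg_right h4 h3.le
    have h8 : 0 ≤ (-s) * Ag s * Eg s := by
      apply mul_nonneg (mul_nonneg (by linarith) h1.le) h3.le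
    rw [Real.norm_eq_abs, abs_le, Dg]
    constructor <;> nlinarith [sq_nonneg (Ag s), sq_nonneg (Eg s)]

lemma Dg_pos (s : ℝ) : 0 < Dg s := by
  have hmono : StrictMono Dg := by
    apply strictMono_of_deriv_pos
    intro u
    rw [(hasDerivAt_Dg u).deriv]
    have := Eg_pos u
    have := Pg_pos u
    positivity
  have hnonneg : ∀ u, 0 ≤ Dg u := by
    intro u
    apply le_of_tendsto tendsto_Dg
    filter_upwards [eventually_le_atBot u] with t ht using hmono.monotone ht
  calc (0:ℝ) ≤ Dg (s - 1) := hnonneg _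
    _ < Dg s := hmono (by linarith)



-- derivative of θ ↦ w₂ x θ
lemma hasDerivAt_w₂θ (x θ : ℝ) :
    HasDerivAt (fun θ => w₂ x θ) (Dg (2 * x + θ) / (2 * (Ag (2 * x + θ)) ^ 2)) θ := by
  set s := 2 * x + θ with hs
  have hcomp : HasDerivAt (fun θ : ℝ => gg (2 * x + θ))
      (-(Eg s * (2 * s * Ag s + Eg s)) / (2 * (Ag s) ^ 2) * 1) θ := by
    exact (hasDerivAt_gg s).comp θ ((hasDerivAt_id θ).const_add (2 * x))
  have h := (hasDerivAt_id θ).add hcomp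
  have heq : (fun θ => w₂ x θ) = fun θ => θ + gg (2 * x + θ) := funext fun θ => w₂_gg x θ
  rw [heq]
  refine h.congr_deriv ?_
  have hA := Ag_pos s
  rw [Dg]
  field_simp
  ring

lemma w₂_strictMono (x : ℝ) : StrictMono (fun θ => w₂ x θ) := by
  apply strictMono_of_deriv_pos
  intro θ
  rw [(hasDerivAt_w₂θ x θ).deriv]
  have := Dg_pos (2 * x + θ)
  have := Ag_pos (2 * x + θ)
  positivity

lemma continuous_w₂θ (x : ℝ) : Continuous (fun θ => w₂ x θ) := by
  have heq : (fun θ => w₂ x θ) = fun θ => θ + gg (2 * x + θ) := funext fun θ => w₂_gg x θ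
  rw [heq]
  exact continuous_id.add (continuous_gg.comp (by fun_prop))

-- gg(-1) < 3/2 from Pg_pos
lemma gg_neg_one_lt : gg (-1) < 3 / 2 := by
  have hP := Pg_pos (-1)
  rw [Pg] at hP
  have hA := Ag_pos (-1)
  have hE := Eg_pos (-1)
  rw [gg, div_lt_iff₀ (by positivity)]
  norm_num at hP ⊢
  nlinarith

def U : Set ℝ := Set.Ioo (0.3 : ℝ) (0.6 : ℝ)

lemma exists_unique_theta {x : ℝ} (hx : x ∈ U) : ∃! θ : ℝ, w₂ x θ = 0 := by
  obtain ⟨hx1, hx2⟩ := hx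
  have ha : w₂ x (-2 * x - 1) < 0 := by
    rw [w₂_gg]
    have : 2 * x + (-2 * x - 1) = -1 := by ring
    rw [this]
    have := gg_neg_one_lt
    norm_num at hx1
    linarith
  have hb : 0 < w₂ x 0 := by
    rw [w₂_gg]
    simpa using gg_pos (2 * x + 0)
  have hab : (-2 * x - 1 : ℝ) ≤ 0 := by norm_num at hx1; linarith
  have hIVT := intermediate_value_Icc hab (continuous_w₂θ x).continuousOn
  have h0 : (0:ℝ) ∈ Set.Icc (w₂ x (-2 * x - 1)) (w₂ x 0) := ⟨ha.le, hb.le⟩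
  obtain ⟨θ₀, -, hθ₀⟩ := hIVT h0
  refine ⟨θ₀, hθ₀, fun y hy => (w₂_strictMono x).injective ?_⟩
  show w₂ x y = w₂ x θ₀
  rw [hy]; exact hθ₀.symm

lemma theta_root {x : ℝ} (hx : x ∈ U) : w₂ x (thetaOf x) = 0 := by
  have h := exists_unique_theta hx
  rw [thetaOf, dif_pos h]
  exact h.choose_spec.1

lemma theta_eq {x θ : ℝ} (hx : x ∈ U) (h : w₂ x θ = 0) : θ = thetaOf x :=
  (w₂_strictMono x).injective (by rw [h, theta_root hx])

-- continuity of thetaOf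
lemma theta_cont {x₀ : ℝ} (hx₀ : x₀ ∈ U) {ε : ℝ} (hε : 0 < ε) :
    ∃ δ > 0, ∀ y : ℝ, |y - x₀| < δ → y ∈ U ∧ |thetaOf y - thetaOf x₀| < ε := by
  set θ₀ := thetaOf x₀
  have h1 : w₂ x₀ (θ₀ - ε) < 0 := by
    rw [← theta_root hx₀]
    exact w₂_strictMono x₀ (by linarith)
  have h2 : 0 < w₂ x₀ (θ₀ + ε) := by
    rw [← theta_root hx₀]
    exact w₂_strictMono x₀ (by linarith)
  have hc : ∀ c : ℝ, Continuous (fun x => w₂ x c) := by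
    intro c
    have heq : (fun x => w₂ x c) = fun x => c + gg (2 * x + c) :=
      funext fun x => w₂_gg x c
    rw [heq]
    exact continuous_const.add (continuous_gg.comp (by fun_prop))
  have hev : ∀ᶠ y in 𝓝 x₀, w₂ y (θ₀ - ε) < 0 ∧ 0 < w₂ y (θ₀ + ε) ∧ y ∈ U := by
    have e1 : ∀ᶠ y in 𝓝 x₀, w₂ y (θ₀ - ε) < 0 :=
      (hc (θ₀ - ε)).continuousAt.eventually_lt_const h1
    have e2 : ∀ᶠ y in 𝓝 x₀, 0 < w₂ y (θ₀ + ε) :=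
      (hc (θ₀ + ε)).continuousAt.eventually_const_lt h2
    have e3 : ∀ᶠ y in 𝓝 x₀, y ∈ U := (isOpen_Ioo).eventually_mem hx₀
    exact e1.and (e2.and e3)
  rw [Metric.eventually_nhds_iff] at hev
  obtain ⟨δ, hδ, hball⟩ := hev
  refine ⟨δ, hδ, fun y hy => ?_⟩
  have hyd : dist y x₀ < δ := by rwa [Real.dist_eq]
  obtain ⟨hy1, hy2, hy3⟩ := hball hyd
  refine ⟨hy3, ?_⟩
  have hroot := theta_root hy3
  have hlt : thetaOf y < θ₀ + ε := by
    by_contra hcon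
    push_neg at hcon
    have := (w₂_strictMono y).monotone hcon
    rw [hroot] at this
    linarith
  have hgt : θ₀ - ε < thetaOf y := by
    by_contra hcon
    push_neg at hcon
    have := (w₂_strictMono y).monotone hcon
    rw [hroot] at this
    linarith
  rw [abs_lt]
  constructor <;> linarith


-- w₁ rewritten with Ag
lemma w₁_Ag (x θ : ℝ) :
    w₁ x θ = -2 * x ^ 2 + θ ^ 2 + Real.log (2 / Real.sqrt Real.pi * Ag (2 * x + θ)) := by
  rw [w₁, erf_Ag]

-- derivative in θ of w₁
lemma hasDerivAt_w₁θ (x θ : ℝ) :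
    HasDerivAt (fun θ => w₁ x θ) (2 * w₂ x θ) θ := by
  set s := 2 * x + θ with hs
  have hA := Ag_pos s
  have hsp := sqrt_pi_pos
  have hin : HasDerivAt (fun θ : ℝ => 2 / Real.sqrt Real.pi * Ag (2 * x + θ))
      (2 / Real.sqrt Real.pi * Eg s) θ := by
    have := ((hasDerivAt_Ag s).comp θ ((hasDerivAt_id θ).const_add (2 * x))).const_mul
      (2 / Real.sqrt Real.pi)
    exact this.congr_deriv (by ring)
  have hlog := hin.log (by positivity)
  have hθ2 : HasDerivAt (fun u : ℝ => -2 * x ^ 2 + u ^ 2) (2 * θ) θ := by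
    have h0 := (hasDerivAt_pow 2 θ).const_add (-2 * x ^ 2 : ℝ)
    exact h0.congr_deriv (by norm_num)
  have h := hθ2.add hlog
  have heq : (fun θ => w₁ x θ) =
      fun θ => (-2 * x ^ 2 + θ ^ 2) + Real.log (2 / Real.sqrt Real.pi * Ag (2 * x + θ)) := by
    funext θ; rw [w₁_Ag]; try ring
  rw [heq]
  refine h.congr_deriv ?_
  rw [w₂_gg, gg]
  field_simp
  ring

lemma continuous_w₁θ (x : ℝ) : Continuous (fun θ => w₁ x θ) :=
  Differentiable.continuous (fun θ => (hasDerivAt_w₁θ x θ).differentiableAt)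

-- envelope: thetaOf x is the global min of θ ↦ w₁ x θ
lemma w₁_min {x : ℝ} (hx : x ∈ U) (θ' : ℝ) : w₁ x (thetaOf x) ≤ w₁ x θ' := by
  set θ₀ := thetaOf x
  rcases lt_trichotomy θ' θ₀ with h | h | h
  · obtain ⟨c, hc, hslope⟩ := exists_hasDerivAt_eq_slope (fun θ => w₁ x θ)
      (fun θ => 2 * w₂ x θ) h (continuous_w₁θ x).continuousOn
      (fun θ _ => hasDerivAt_w₁θ x θ)
    have hneg : w₂ x c < 0 := by
      rw [← theta_root hx]
      exact w₂_strictMono x hc.2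
    have hpos : 0 < θ₀ - θ' := by linarith
    have := hslope
    rw [eq_div_iff (by intro hz; rw [sub_eq_zero] at hz; exact absurd hz.symm h.ne) ] at this
    nlinarith
  · rw [h]
  · obtain ⟨c, hc, hslope⟩ := exists_hasDerivAt_eq_slope (fun θ => w₁ x θ)
      (fun θ => 2 * w₂ x θ) h (continuous_w₁θ x).continuousOn
      (fun θ _ => hasDerivAt_w₁θ x θ)
    have hpos' : 0 < w₂ x c := by
      rw [← theta_root hx]
      exact w₂_strictMono x hc.1
    have := hslope
    rw [eq_div_iff (by intro hz; rw [sub_eq_zero] at hz; exact absurd hz h.ne')] at this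
    nlinarith

-- x-partial of w₁
noncomputable def pfun (a b : ℝ) : ℝ := -4 * a + 4 * gg (2 * a + b)

lemma hasDerivAt_w₁x (b x : ℝ) :
    HasDerivAt (fun y => w₁ y b) (pfun x b) x := by
  set s := 2 * x + b with hs
  have hA := Ag_pos s
  have hsp := sqrt_pi_pos
  have hlin : HasDerivAt (fun y : ℝ => 2 * y + b) 2 x := by
    simpa using ((hasDerivAt_id x).const_mul 2).add_const b
  have hin2 : HasDerivAt (fun y : ℝ => 2 / Real.sqrt Real.pi * Ag (2 * y + b))
      (2 / Real.sqrt Real.pi * (Eg s * 2)) x := by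
    have := ((hasDerivAt_Ag s).comp x hlin).const_mul (2 / Real.sqrt Real.pi)
    simpa [mul_assoc] using this
  have hlog := hin2.log (by positivity)
  have hsq2 : HasDerivAt (fun y : ℝ => -2 * y ^ 2 + b ^ 2) (-4 * x) x := by
    have := ((hasDerivAt_pow 2 x).const_mul (-2 : ℝ)).add_const (b ^ 2)
    exact this.congr_deriv (by push_cast; ring)
  have h := hsq2.add hlog
  have heq : (fun y => w₁ y b) =
      fun y => (-2 * y ^ 2 + b ^ 2) + Real.log (2 / Real.sqrt Real.pi * Ag (2 * y + b)) := by
    funext y; rw [w₁_Ag]; try ring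
  rw [heq]
  refine h.congr_deriv ?_
  rw [pfun, gg]
  rw [hs]
  field_simp
  ring

lemma continuous_pfun : Continuous fun p : ℝ × ℝ => pfun p.1 p.2 := by
  simp only [pfun]
  have h1 : Continuous fun p : ℝ × ℝ => 2 * p.1 + p.2 := by fun_prop
  exact ((continuous_const.mul continuous_fst)).add
    (continuous_const.mul (continuous_gg.comp h1))



-- numeric: gg 0.37613 < 0.37613
lemma sqrt_pi_ge : (1.7724 : ℝ) ≤ Real.sqrt Real.pi := by
  have h : (1.7724 : ℝ) ^ 2 ≤ Real.pi := by nlinarith [Real.pi_gt_d6]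
  calc (1.7724 : ℝ) = Real.sqrt ((1.7724 : ℝ) ^ 2) := (Real.sqrt_sq (by norm_num)).symm
    _ ≤ Real.sqrt Real.pi := Real.sqrt_le_sqrt h

lemma gg_num : gg (0.37613 : ℝ) < 0.37613 := by
  obtain ⟨c, hc⟩ : ∃ c : ℝ, c = 0.37613 := ⟨_, rfl⟩
  rw [← hc]
  have hint_lb : c * Eg c ≤ ∫ t in (0:ℝ)..c, Real.exp (-t ^ 2) := by
    have hmono := intervalIntegral.integral_mono_on (a := (0:ℝ)) (b := c)
      (f := fun _ : ℝ => Real.exp (-c ^ 2)) (g := fun t : ℝ => Real.exp (-t ^ 2))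
      (by rw [hc]; norm_num) (intervalIntegrable_const (μ := volume)) (cont_gauss.intervalIntegrable 0 c) ?_
    · calc c * Eg c = (c - 0) • Real.exp (-c ^ 2) := by rw [Eg]; simp [smul_eq_mul]
        _ = ∫ _ in (0:ℝ)..c, Real.exp (-c ^ 2) := (intervalIntegral.integral_const _).symm
        _ ≤ _ := hmono
    · intro t ht
      apply Real.exp_le_exp.mpr
      have h1 : 0 ≤ t := ht.1
      have h2 : t ≤ c := ht.2
      nlinarith [sq_nonneg t, sq_nonneg c]
  have hAc : Real.sqrt Real.pi / 2 + c * Eg c ≤ Ag c := by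
    have := Ag_sub 0 c
    rw [Ag_zero] at this
    linarith
  have hE1 : Eg c * Real.exp (c ^ 2) = 1 := by
    rw [Eg, ← Real.exp_add]; norm_num
  have hexp : (1 : ℝ) + c ^ 2 ≤ Real.exp (c ^ 2) := by
    have := Real.add_one_le_exp (c ^ 2)
    linarith
  have hEpos := Eg_pos c
  have hE2 : Eg c * (1 + c ^ 2) ≤ 1 := by nlinarith
  have hnum : (1 : ℝ) - 2 * c ^ 2 < 1.7724 * c * (1 + c ^ 2) := by rw [hc]; norm_num
  have h9 : (0:ℝ) < 1 + c ^ 2 := by positivity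
  have h10 : Eg c * (1 + c ^ 2) * (1 - 2 * c ^ 2) ≤ 1 * (1 - 2 * c ^ 2) :=
    mul_le_mul_of_nonneg_right hE2 (by rw [hc]; norm_num)
  have hkey : Eg c < 1.7724 * c + 2 * c ^ 2 * Eg c := by
    nlinarith [h10, hnum, mul_pos hEpos h9]
  have hApos := Ag_pos c
  rw [gg, div_lt_iff₀ (by positivity)]
  have hsp := sqrt_pi_ge
  have hcpos : (0:ℝ) < c := by rw [hc]; norm_num
  calc Eg c < 1.7724 * c + 2 * c ^ 2 * Eg c := hkey
    _ ≤ Real.sqrt Real.pi * c + 2 * c ^ 2 * Eg c := by nlinarith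
    _ = 2 * c * (Real.sqrt Real.pi / 2 + c * Eg c) := by ring
    _ ≤ 2 * c * Ag c := by nlinarith
    _ = c * (2 * Ag c) := by ring

-- MVT in x helper
lemma mvtx (b x y : ℝ) (h : y ≠ x) :
    ∃ ξ, |ξ - x| < |y - x| ∧ w₁ y b - w₁ x b = (y - x) * pfun ξ b := by
  have hcont : ∀ u v : ℝ, ContinuousOn (fun a => w₁ a b) (Set.Icc u v) :=
    fun u v => Continuous.continuousOn
      (Differentiable.continuous fun a => (hasDerivAt_w₁x b a).differentiableAt)
  rcases lt_or_gt_of_ne h with hlt | hgt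
  · obtain ⟨ξ, hξ, hsl⟩ := exists_hasDerivAt_eq_slope (fun a => w₁ a b)
      (fun a => pfun a b) hlt (hcont y x) (fun a _ => hasDerivAt_w₁x b a)
    refine ⟨ξ, ?_, ?_⟩
    · rw [abs_of_neg (by linarith [hξ.2] : ξ - x < 0), abs_of_neg (by linarith : y - x < 0)]
      linarith [hξ.1]
    · rw [eq_div_iff (sub_ne_zero.mpr hlt.ne')] at hsl
      linear_combination hsl
  · obtain ⟨ξ, hξ, hsl⟩ := exists_hasDerivAt_eq_slope (fun a => w₁ a b)
      (fun a => pfun a b) hgt (hcont x y) (fun a _ => hasDerivAt_w₁x b a)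
    refine ⟨ξ, ?_, ?_⟩
    · rw [abs_of_pos (by linarith [hξ.1] : 0 < ξ - x), abs_of_pos (by linarith : 0 < y - x)]
      linarith [hξ.2]
    · rw [eq_div_iff (sub_ne_zero.mpr (ne_of_gt hgt))] at hsl
      linear_combination -hsl



lemma hasDerivAt_wfun {x₀ : ℝ} (hx₀ : x₀ ∈ U) :
    HasDerivAt wfun (-4 * (x₀ + thetaOf x₀)) x₀ := by
  have hL : pfun x₀ (thetaOf x₀) = -4 * (x₀ + thetaOf x₀) := by
    have h := theta_root hx₀
    rw [w₂_gg] at h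
    rw [pfun]
    linarith
  rw [hasDerivAt_iff_tendsto_slope, Metric.tendsto_nhdsWithin_nhds]
  intro ε hε
  have hcont := continuous_pfun.continuousAt (x := (x₀, thetaOf x₀))
  rw [Metric.continuousAt_iff] at hcont
  obtain ⟨δ₁, hδ₁, hp⟩ := hcont (ε / 2) (by linarith)
  obtain ⟨δ₂, hδ₂, hθc⟩ := theta_cont hx₀ hδ₁
  refine ⟨min δ₁ δ₂, by positivity, ?_⟩
  intro y hyne hydist
  have hyx : y ≠ x₀ := hyne
  rw [Real.dist_eq] at hydist
  have hyd1 : |y - x₀| < δ₁ := lt_of_lt_of_le hydist (min_le_left _ _)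
  have hyd2 : |y - x₀| < δ₂ := lt_of_lt_of_le hydist (min_le_right _ _)
  obtain ⟨hyU, hθy⟩ := hθc y hyd2
  have hPbound : ∀ ξ b : ℝ, |ξ - x₀| < δ₁ → |b - thetaOf x₀| < δ₁ →
      |pfun ξ b - pfun x₀ (thetaOf x₀)| < ε / 2 := by
    intro ξ b h1 h2
    have hd : dist (ξ, b) (x₀, thetaOf x₀) < δ₁ := by
      rw [Prod.dist_eq]
      apply max_lt <;> rwa [Real.dist_eq]
    have := hp hd
    rwa [Real.dist_eq] at this
  obtain ⟨ξ₁, hξ₁d, hξ₁⟩ := mvtx (thetaOf x₀) x₀ y hyx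
  obtain ⟨ξ₂, hξ₂d, hξ₂⟩ := mvtx (thetaOf y) x₀ y hyx
  have hb₁ := hPbound ξ₁ (thetaOf x₀) (hξ₁d.trans hyd1) (by simpa using hδ₁)
  have hb₂ := hPbound ξ₂ (thetaOf y) (hξ₂d.trans hyd1) hθy
  have e₁ : wfun y - wfun x₀ ≤ (y - x₀) * pfun ξ₁ (thetaOf x₀) := by
    have h1 : wfun y ≤ w₁ y (thetaOf x₀) := w₁_min hyU _
    have h2 : wfun x₀ = w₁ x₀ (thetaOf x₀) := rfl
    rw [← hξ₁]
    linarith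
  have e₂ : (y - x₀) * pfun ξ₂ (thetaOf y) ≤ wfun y - wfun x₀ := by
    have h1 : wfun x₀ ≤ w₁ x₀ (thetaOf y) := w₁_min hx₀ _
    have h2 : wfun y = w₁ y (thetaOf y) := rfl
    rw [← hξ₂]
    linarith
  set L := pfun x₀ (thetaOf x₀) with hLdef
  have habs : |wfun y - wfun x₀ - (y - x₀) * L| ≤ |y - x₀| * (ε / 2) := by
    have k₁ : |(y - x₀) * (pfun ξ₁ (thetaOf x₀) - L)| ≤ |y - x₀| * (ε / 2) := by
      rw [abs_mul]
      exact mul_le_mul_of_nonneg_left hb₁.le (abs_nonneg _)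
    have k₂ : |(y - x₀) * (pfun ξ₂ (thetaOf y) - L)| ≤ |y - x₀| * (ε / 2) := by
      rw [abs_mul]
      exact mul_le_mul_of_nonneg_left hb₂.le (abs_nonneg _)
    rw [abs_le]
    constructor
    · have := neg_abs_le ((y - x₀) * (pfun ξ₂ (thetaOf y) - L))
      nlinarith [e₂]
    · have := le_abs_self ((y - x₀) * (pfun ξ₁ (thetaOf x₀) - L))
      nlinarith [e₁]
  have hne : y - x₀ ≠ 0 := sub_ne_zero.mpr hyx
  have hslope : slope wfun x₀ y = (wfun y - wfun x₀) / (y - x₀) := slope_def_field wfun x₀ y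
  rw [Real.dist_eq, hslope, ← hL]
  have hrw : (wfun y - wfun x₀) / (y - x₀) - L =
      (wfun y - wfun x₀ - (y - x₀) * L) / (y - x₀) := by field_simp
  rw [hrw, abs_div]
  have hpos : 0 < |y - x₀| := abs_pos.mpr hne
  rw [div_lt_iff₀ hpos]
  calc |wfun y - wfun x₀ - (y - x₀) * L| ≤ |y - x₀| * (ε / 2) := habs
    _ < ε * |y - x₀| := by nlinarith

theorem stmt5 :
    (∀ x ∈ Set.Ioo (0.37613 : ℝ) 0.58870, HasDerivAt wfun (-4 * (x + thetaOf x)) x) ∧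
    StrictAntiOn wfun (Set.Icc (0.37613 : ℝ) 0.58870) := by
  have hsub : Set.Icc (0.37613 : ℝ) 0.58870 ⊆ U := by
    intro x hx
    constructor
    · have := hx.1; norm_num at this ⊢; linarith
    · have := hx.2; norm_num at this ⊢; linarith
  have hderiv : ∀ x ∈ U, HasDerivAt wfun (-4 * (x + thetaOf x)) x := fun x hx =>
    hasDerivAt_wfun hx
  have hneg : ∀ x ∈ Set.Ioo (0.37613 : ℝ) 0.58870, -4 * (x + thetaOf x) < 0 := by
    intro x hx
    obtain ⟨hx1, hx2⟩ := hx
    have hxU : x ∈ U := by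
      constructor
      · norm_num at hx1 ⊢; linarith
      · norm_num at hx2 ⊢; linarith
    have hgle : gg (2 * x + -x) ≤ gg 0.37613 := by
      apply gg_anti
      norm_num at hx1 ⊢
      linarith
    have h1 : w₂ x (-x) < 0 := by
      rw [w₂_gg]
      have : (0.37613 : ℝ) < x := hx1
      linarith [gg_num]
    have hroot := theta_root hxU
    have hgt : -x < thetaOf x := by
      by_contra hcon
      push_neg at hcon
      have := (w₂_strictMono x).monotone hcon
      rw [hroot] at this
      linarith
    linarith
  constructor
  · intro x hx
    apply hderiv
    exact ⟨by norm_num at hx ⊢ <;> linarith [hx.1], by norm_num at hx ⊢ <;> linarith [hx.2]⟩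
  · apply strictAntiOn_of_deriv_neg (convex_Icc _ _)
    · intro x hx
      exact (hderiv x (hsub hx)).continuousAt.continuousWithinAt
    · intro x hx
      rw [interior_Icc] at hx
      rw [(hderiv x (hsub (Ioo_subset_Icc_self hx))).deriv]
      exact hneg x hx
end

section
/- For every a ∈ ℝ: (1/π) ∫₀^∞ ∫_{t₂}^∞ exp(−((t₁−a)² + t₂²)/2) dt₁ dt₂ = (1 + erf(a/2))²/4. -/
open MeasureTheory

section aux
open Set Filter intervalIntegral

lemma gauss_integrable : Integrable (fun u : ℝ => Real.exp (-u ^ 2)) := by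
  simpa using integrable_exp_neg_mul_sq (by norm_num : (0:ℝ) < 1)

lemma gauss_cont : Continuous (fun u : ℝ => Real.exp (-u ^ 2)) := by
  continuity

lemma gauss_Ioi_zero : ∫ u in Set.Ioi (0:ℝ), Real.exp (-u ^ 2) = Real.sqrt Real.pi / 2 := by
  have := integral_gaussian_Ioi 1
  simpa using this

/-- translation for Ioi integrals -/
lemma shift_Ioi (c : ℝ) (f : ℝ → ℝ) :
    ∫ x in Set.Ioi c, f x = ∫ x in Set.Ioi (0:ℝ), f (x + c) := by
  have h : MeasurePreserving (fun x : ℝ => x + c) volume volume :=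
    measurePreserving_add_right volume c
  have he : MeasurableEmbedding (fun x : ℝ => x + c) :=
    (Homeomorph.addRight c).measurableEmbedding
  have hpre : (fun x : ℝ => x + c) ⁻¹' Set.Ioi c = Set.Ioi 0 := by
    ext x; simp
  rw [← h.setIntegral_preimage_emb he f (Set.Ioi c), hpre]

noncomputable def Ef (c : ℝ) : ℝ := ∫ u in Set.Ioi c, Real.exp (-u ^ 2)

lemma Ef_nonneg (c : ℝ) : 0 ≤ Ef c :=
  setIntegral_nonneg measurableSet_Ioi (fun x _ => (Real.exp_pos _).le)

lemma primitive_tendsto :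
    Tendsto (fun b => ∫ t in (0:ℝ)..b, Real.exp (-t ^ 2)) atTop
      (nhds (Real.sqrt Real.pi / 2)) := by
  have := intervalIntegral_tendsto_integral_Ioi 0 gauss_integrable.integrableOn
    (tendsto_id (α := ℝ))
  rwa [gauss_Ioi_zero] at this

lemma primitive_hasDerivAt (x : ℝ) :
    HasDerivAt (fun u => ∫ t in (0:ℝ)..u, Real.exp (-t ^ 2)) (Real.exp (-x ^ 2)) x :=
  intervalIntegral.integral_hasDerivAt_right (gauss_integrable.intervalIntegrable)
    (gauss_cont.stronglyMeasurableAtFilter _ _) gauss_cont.continuousAt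

lemma Ef_eq (c : ℝ) :
    Ef c = Real.sqrt Real.pi / 2 - ∫ t in (0:ℝ)..c, Real.exp (-t ^ 2) := by
  have := integral_Ioi_of_hasDerivAt_of_nonneg
    ((primitive_hasDerivAt c).continuousAt.continuousWithinAt)
    (fun x _ => primitive_hasDerivAt x) (fun x _ => (Real.exp_pos _).le) primitive_tendsto
  simpa [Ef] using this

lemma Ef_tendsto : Tendsto Ef atTop (nhds 0) := by
  have h := primitive_tendsto
  have : Tendsto (fun c => Real.sqrt Real.pi / 2 - ∫ t in (0:ℝ)..c, Real.exp (-t ^ 2)) atTop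
      (nhds (Real.sqrt Real.pi / 2 - Real.sqrt Real.pi / 2)) := tendsto_const_nhds.sub h
  exact this.congr (fun c => (Ef_eq c).symm) |>.congr' (Filter.Eventually.of_forall (fun _ => rfl)) |>.mono_right (by simp)

lemma Ef_hasDerivAt (c : ℝ) : HasDerivAt Ef (-Real.exp (-c ^ 2)) c := by
  have h : HasDerivAt (fun u => Real.sqrt Real.pi / 2 - ∫ t in (0:ℝ)..u, Real.exp (-t ^ 2))
      (0 - Real.exp (-c ^ 2)) c := (hasDerivAt_const _ _).sub (primitive_hasDerivAt c)
  have := h.congr_of_eventuallyEq (Filter.Eventually.of_forall (fun x => (Ef_eq x)))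
  simpa using this

lemma Ef_neg_half (a : ℝ) : Ef (-(a / 2)) = Real.sqrt Real.pi / 2 * (1 + erf (a / 2)) := by
  have hodd : ∫ t in (0:ℝ)..(-(a/2)), Real.exp (-t ^ 2)
      = - ∫ t in (0:ℝ)..(a/2), Real.exp (-t ^ 2) := by
    have h1 := intervalIntegral.integral_comp_neg (a := (0:ℝ)) (b := a/2)
        (f := fun t : ℝ => Real.exp (-t ^ 2))
    simp only [neg_zero, neg_sq] at h1
    rw [intervalIntegral.integral_symm, ← h1]
  have hpi : Real.sqrt Real.pi ≠ 0 := by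
    positivity
  rw [Ef_eq, hodd, erf]
  field_simp
  ring
end aux

theorem stmt11 (a : ℝ) :
    (1 / Real.pi) *
      ∫ t₂ in Set.Ioi (0:ℝ), ∫ t₁ in Set.Ioi t₂, Real.exp (-((t₁ - a) ^ 2 + t₂ ^ 2) / 2)
    = (1 + erf (a / 2)) ^ 2 / 4 := by
  -- Step 1+2: rewrite the inner integral by translation and splitting the exponential
  have step1 : ∀ t₂ : ℝ,
      (∫ t₁ in Set.Ioi t₂, Real.exp (-((t₁ - a) ^ 2 + t₂ ^ 2) / 2))
      = ∫ r in Set.Ioi (0:ℝ),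
          Real.exp (-((r + t₂ - a) ^ 2 + t₂ ^ 2) / 2) := by
    intro t₂
    exact shift_Ioi t₂ (fun t₁ => Real.exp (-((t₁ - a) ^ 2 + t₂ ^ 2) / 2))
  -- integrability for Fubini
  have hcontF : Continuous (fun z : ℝ × ℝ =>
      Real.exp (-((z.2 + z.1 - a) ^ 2 + z.1 ^ 2) / 2)) := by
    fun_prop
  have hint : Integrable (Function.uncurry (fun t₂ r : ℝ =>
      Real.exp (-((r + t₂ - a) ^ 2 + t₂ ^ 2) / 2)))
      ((volume.restrict (Set.Ioi (0:ℝ))).prod (volume.restrict (Set.Ioi (0:ℝ)))) := by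
    have hb1 : Integrable (fun t : ℝ =>
        Real.exp (a ^ 2 / 2) * Real.exp (-(1/2 : ℝ) * t ^ 2))
        (volume.restrict (Set.Ioi (0:ℝ))) :=
      (((integrable_exp_neg_mul_sq (by norm_num : (0:ℝ) < 1/2)).const_mul
        (Real.exp (a ^ 2 / 2)))).restrict
    have hb2 : Integrable (fun r : ℝ => Real.exp (-(1/4 : ℝ) * r ^ 2))
        (volume.restrict (Set.Ioi (0:ℝ))) :=
      (integrable_exp_neg_mul_sq (by norm_num : (0:ℝ) < 1/4)).restrict
    have hbnd := hb1.mul_prod hb2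
    refine hbnd.mono' (hcontF.aestronglyMeasurable) ?_
    rw [Measure.prod_restrict]
    refine (MeasureTheory.ae_restrict_iff' (measurableSet_Ioi.prod measurableSet_Ioi)).2
      (Filter.Eventually.of_forall ?_)
    rintro ⟨t₂, r⟩ ⟨ht, hr⟩
    simp only [Function.uncurry, Real.norm_eq_abs, Real.abs_exp]
    rw [mul_assoc, ← Real.exp_add, ← Real.exp_add]
    refine Real.exp_le_exp.2 ?_
    have h1 : (0:ℝ) ≤ t₂ := (Set.mem_Ioi.1 ht).le
    have h2 : (0:ℝ) ≤ r := (Set.mem_Ioi.1 hr).le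
    nlinarith [sq_nonneg (r + t₂ - 2*a), sq_nonneg (r + t₂), mul_nonneg h1 h2]
  -- Fubini swap
  have step2 :
      (∫ t₂ in Set.Ioi (0:ℝ), ∫ r in Set.Ioi (0:ℝ),
          Real.exp (-((r + t₂ - a) ^ 2 + t₂ ^ 2) / 2))
      = ∫ r in Set.Ioi (0:ℝ), ∫ t₂ in Set.Ioi (0:ℝ),
          Real.exp (-((r + t₂ - a) ^ 2 + t₂ ^ 2) / 2) :=
    MeasureTheory.integral_integral_swap hint
  -- Step 3: compute inner integral over t₂
  have step3 : ∀ r : ℝ,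
      (∫ t₂ in Set.Ioi (0:ℝ), Real.exp (-((r + t₂ - a) ^ 2 + t₂ ^ 2) / 2))
      = Real.exp (-((r - a)/2) ^ 2) * Ef ((r - a)/2) := by
    intro r
    have hsplit : ∀ t₂ : ℝ, Real.exp (-((r + t₂ - a) ^ 2 + t₂ ^ 2) / 2)
        = Real.exp (-(t₂ + (r - a)/2) ^ 2) * Real.exp (-((r - a)/2) ^ 2) := by
      intro t₂
      rw [← Real.exp_add]
      congr 1
      ring
    simp_rw [hsplit]
    rw [MeasureTheory.integral_mul_const]
    have := shift_Ioi ((r - a)/2) (fun u => Real.exp (-u ^ 2))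
    rw [show Ef ((r - a)/2) = ∫ u in Set.Ioi ((r-a)/2), Real.exp (-u ^ 2) from rfl, this]
    ring
  -- Step 4: compute the outer integral by FTC on Ioi
  have hDer : ∀ r : ℝ, HasDerivAt (fun r => -(Ef ((r - a)/2)) ^ 2)
      (Real.exp (-((r - a)/2) ^ 2) * Ef ((r - a)/2)) r := by
    intro r
    have hinner : HasDerivAt (fun r : ℝ => (r - a)/2) (1/2 : ℝ) r := by
      simpa using ((hasDerivAt_id r).sub_const a).div_const 2
    have h1 : HasDerivAt (fun r : ℝ => Ef ((r - a)/2))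
        (-Real.exp (-((r - a)/2) ^ 2) * (1/2)) r :=
      by have := (Ef_hasDerivAt ((r - a)/2)).comp r hinner; exact this
    have h2 : HasDerivAt (fun r => -(Ef ((r - a)/2)) ^ 2) _ r := (h1.pow 2).neg
    convert h2 using 1
    ring
  have step4 :
      (∫ r in Set.Ioi (0:ℝ), Real.exp (-((r - a)/2) ^ 2) * Ef ((r - a)/2))
      = Ef (-(a/2)) ^ 2 := by
    have htend : Filter.Tendsto (fun r : ℝ => -(Ef ((r - a)/2)) ^ 2) Filter.atTop
        (nhds 0) := by
      have harg : Filter.Tendsto (fun r : ℝ => (r - a)/2) Filter.atTop Filter.atTop :=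
        (Filter.tendsto_atTop_add_const_right _ (-a) Filter.tendsto_id).atTop_div_const
          (by norm_num)
      have := ((Ef_tendsto.comp harg).pow 2).neg
      simpa using this
    have := MeasureTheory.integral_Ioi_of_hasDerivAt_of_nonneg
      (hDer 0).continuousAt.continuousWithinAt (fun x _ => hDer x)
      (fun x _ => mul_nonneg (Real.exp_pos _).le (Ef_nonneg _)) htend
    rw [this]
    ring_nf
  -- put everything together
  simp_rw [step1]
  rw [step2]
  simp_rw [step3]
  rw [step4, Ef_neg_half]
  have hsq : Real.sqrt Real.pi ^ 2 = Real.pi := Real.sq_sqrt Real.pi_pos.le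
  have hpi : Real.pi ≠ 0 := Real.pi_ne_zero
  field_simp
  nlinarith [hsq, sq_nonneg (1 + erf (a/2))]
end
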